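/- Let p, q > 0 and a, λ ∈ ℝ. (a) Suppose h₁ : ℝ² → ℝ is such that the function h(x,y,z) := h₁(x,z) is a minimal element of H⁺(Δ_a, λ), where Δ_a is the Laplacian with vertical drift a on Sol(p,q). Then h₁ is a minimal element of H⁺(Δ^{H(p)}_a, λ). (b) Suppose h₂ : ℝ² → ℝ is such that the function h(x,y,z) := h₂(y,−z) is a minimal element of H⁺(Δ_a, λ). Then h₂ is a minimal element of H⁺(Δ^{H(q)}_{−a}, λ). -/

import Mathlib

open Real

/-- The Laplacian with vertical drift `a` on `Sol(p,q) ≡ ℝ³`: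
`Δ_a f = (1/2)(e^{2pz} f_xx + e^{−2qz} f_yy + f_zz) + a f_z`. -/
noncomputable def solLap (p q a : ℝ) (f : ℝ × ℝ × ℝ → ℝ) (w : ℝ × ℝ × ℝ) : ℝ :=
  (1/2) * (Real.exp (2*p*w.2.2) * iteratedDeriv 2 (fun t => f (t, w.2.1, w.2.2)) w.1
    + Real.exp (-(2*q*w.2.2)) * iteratedDeriv 2 (fun t => f (w.1, t, w.2.2)) w.2.1
    + iteratedDeriv 2 (fun t => f (w.1, w.2.1, t)) w.2.2)
  + a * deriv (fun t => f (w.1, w.2.1, t)) w.2.2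

/-- The hyperbolic Laplacian with drift `b` on the logarithmic model `H(r) ≡ ℝ²`:
`Δ^{H(r)}_b g = (1/2)(e^{2rz} g_xx + g_zz) + b g_z`. -/
noncomputable def hypLap (r b : ℝ) (g : ℝ × ℝ → ℝ) (w : ℝ × ℝ) : ℝ :=
  (1/2) * (Real.exp (2*r*w.2) * iteratedDeriv 2 (fun t => g (t, w.2)) w.1
    + iteratedDeriv 2 (fun t => g (w.1, t)) w.2)
  + b * deriv (fun t => g (w.1, t)) w.2

/-- Membership in `H⁺(Δ_a, λ)` on `Sol(p,q)`: strictly positive `C²` `λ`-eigenfunction. -/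
def IsSolEigen (p q a lam : ℝ) (h : ℝ × ℝ × ℝ → ℝ) : Prop :=
  ContDiff ℝ 2 h ∧ (∀ w, 0 < h w) ∧ ∀ w, solLap p q a h w = lam * h w

/-- A minimal element of `H⁺(Δ_a, λ)` on `Sol(p,q)`: value `1` at the origin, and any
element of `H⁺(Δ_a, λ)` dominated by it is a constant multiple of it. -/
def IsSolMinimal (p q a lam : ℝ) (h : ℝ × ℝ × ℝ → ℝ) : Prop :=
  IsSolEigen p q a lam h ∧ h (0, 0, 0) = 1 ∧
    ∀ f, IsSolEigen p q a lam f → (∀ w, f w ≤ h w) → ∃ c : ℝ, ∀ w, f w = c * h w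

/-- Membership in `H⁺(Δ^{H(r)}_b, λ)`: strictly positive `C²` `λ`-eigenfunction. -/
def IsHypEigen (r b lam : ℝ) (g : ℝ × ℝ → ℝ) : Prop :=
  ContDiff ℝ 2 g ∧ (∀ w, 0 < g w) ∧ ∀ w, hypLap r b g w = lam * g w

/-- A minimal element of `H⁺(Δ^{H(r)}_b, λ)`. -/
def IsHypMinimal (r b lam : ℝ) (g : ℝ × ℝ → ℝ) : Prop :=
  IsHypEigen r b lam g ∧ g (0, 0) = 1 ∧
    ∀ f, IsHypEigen r b lam f → (∀ w, f w ≤ g w) → ∃ c : ℝ, ∀ w, f w = c * g w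


lemma iteratedDeriv2_const (c : ℝ) (x : ℝ) : iteratedDeriv 2 (fun _ : ℝ => c) x = 0 := by
  simp [iteratedDeriv_succ, iteratedDeriv_zero]

lemma lap_lift1 (p q a : ℝ) (g : ℝ × ℝ → ℝ) (w : ℝ × ℝ × ℝ) :
    solLap p q a (fun w => g (w.1, w.2.2)) w = hypLap p a g (w.1, w.2.2) := by
  simp only [solLap, hypLap, iteratedDeriv2_const]
  ring

lemma lap_lift2 (p q a : ℝ) (g : ℝ × ℝ → ℝ) (w : ℝ × ℝ × ℝ) :
    solLap p q a (fun w => g (w.2.1, -w.2.2)) w = hypLap q (-a) g (w.2.1, -w.2.2) := by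
  simp only [solLap, hypLap, iteratedDeriv2_const,
    iteratedDeriv_comp_neg 2 (fun t => g (w.2.1, t)),
    deriv_comp_neg (f := fun t => g (w.2.1, t))]
  rw [show 2*q*(-w.2.2) = -(2*q*w.2.2) by ring]
  norm_num

theorem lift_minimal (p q a lam : ℝ) (hp : 0 < p) (hq : 0 < q) :
    (∀ h₁ : ℝ × ℝ → ℝ,
      IsSolMinimal p q a lam (fun w => h₁ (w.1, w.2.2)) → IsHypMinimal p a lam h₁)
    ∧
    (∀ h₂ : ℝ × ℝ → ℝ,
      IsSolMinimal p q a lam (fun w => h₂ (w.2.1, -w.2.2)) → IsHypMinimal q (-a) lam h₂) :=  by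
  constructor
  · intro h₁ ⟨⟨hC, hpos, heig⟩, hone, hmin⟩
    refine ⟨⟨?_, ?_, ?_⟩, by simpa using hone, ?_⟩
    · have hl : ContDiff ℝ 2 (fun v : ℝ × ℝ => ((v.1, 0, v.2) : ℝ × ℝ × ℝ)) := by fun_prop
      have : ContDiff ℝ 2 (fun v : ℝ × ℝ => h₁ (v.1, v.2)) := hC.comp hl
      simpa using this
    · intro w; simpa using hpos (w.1, 0, w.2)
    · intro w
      have := heig (w.1, 0, w.2)
      rw [lap_lift1] at this
      simpa using this
    · intro f ⟨fC, fpos, feig⟩ fle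
      obtain ⟨c, hc⟩ := hmin (fun w => f (w.1, w.2.2))
        ⟨fC.comp (contDiff_fst.prodMk (contDiff_snd.comp contDiff_snd)),
         fun w => fpos _,
         fun w => by rw [lap_lift1]; exact feig _⟩
        (fun w => fle _)
      exact ⟨c, fun w => by simpa using hc (w.1, 0, w.2)⟩
  · intro h₂ ⟨⟨hC, hpos, heig⟩, hone, hmin⟩
    refine ⟨⟨?_, ?_, ?_⟩, by simpa using hone, ?_⟩
    · have hl : ContDiff ℝ 2 (fun v : ℝ × ℝ => ((0, v.1, -v.2) : ℝ × ℝ × ℝ)) := by fun_prop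
      have : ContDiff ℝ 2 (fun v : ℝ × ℝ => h₂ (v.1, -(-v.2))) := hC.comp hl
      simpa using this
    · intro w; simpa using hpos (0, w.1, -w.2)
    · intro w
      have := heig (0, w.1, -w.2)
      rw [lap_lift2] at this
      simpa using this
    · intro f ⟨fC, fpos, feig⟩ fle
      obtain ⟨c, hc⟩ := hmin (fun w => f (w.2.1, -w.2.2))
        ⟨fC.comp ((contDiff_fst.comp contDiff_snd).prodMk (contDiff_snd.comp contDiff_snd).neg),
         fun w => fpos _,
         fun w => by rw [lap_lift2]; exact feig _⟩
        (fun w => fle _)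
      exact ⟨c, fun w => by simpa using hc (0, w.1, -w.2)⟩
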